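/- Assume that for every class c ∈ C the revision protocol ρ^c is imitative. Let μ ∈ X be a mixed stationary Nash equilibrium (MSNE) such that for every class c ∈ C there is exactly one policy u ∈ U^c attaining max_{v∈U^c} F^c_v(μ). Then μ is a rest point of the mean dynamic, i.e. f^{c,d}_{s,u}(μ) + f^{c,r}_{s,u}(μ) = 0 for every c ∈ C, s ∈ S^c, u ∈ U^c. -/
import Mathlib


open Finset

variable {C : Type*} {S U : C → Type*}

/-- Membership in the state-policy distribution space `X`. -/
def MemX [∀ c, Fintype (S c)] [∀ c, Fintype (U c)]
    (m : C → ℝ) (μ : (c : C) → S c → U c → ℝ) : Prop :=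
  ∀ c, (∀ s u, 0 ≤ μ c s u) ∧ (∑ s, ∑ u, μ c s u) = m c

/-- Mixed stationary Nash equilibrium: every policy with positive mass is payoff maximizing,
and the state distribution of each policy is the stationary one. -/
def IsMSNE [∀ c, Fintype (S c)]
    (F : (c : C) → ((c' : C) → S c' → U c' → ℝ) → U c → ℝ)
    (η : (c : C) → U c → S c → ℝ)
    (μ : (c : C) → S c → U c → ℝ) : Prop :=
  ∀ (c : C) (u : U c),
    ((0 < ∑ s, μ c s u) → ∀ v, F c μ v ≤ F c μ u) ∧
    (∀ s, μ c s u = η c u s * ∑ s', μ c s' u)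

/-- The simplex `Δ` of policy-mass vectors of total mass `mc`. -/
def simplexSet {V : Type*} [Fintype V] (mc : ℝ) : Set (V → ℝ) :=
  {σ | (∀ v, 0 ≤ σ v) ∧ (∑ v, σ v) = mc}

/-- The dynamic (state-transition) flow `f^{c,d}_{s,u}(μ)`. -/
def fdFlow [∀ c, Fintype (S c)]
    (lam : C → ℝ) (φ : (c : C) → U c → Matrix (S c) (S c) ℝ)
    (μ : (c : C) → S c → U c → ℝ) (c : C) (s : S c) (u : U c) : ℝ :=
  lam c * ((∑ s', φ c u s s' * μ c s' u) - μ c s u)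

/-- The revision flow `f^{c,r}_{s,u}(μ)`. -/
def frFlow [∀ c, Fintype (S c)] [∀ c, Fintype (U c)]
    (F : (c : C) → ((c' : C) → S c' → U c' → ℝ) → U c → ℝ)
    (ρ : (c : C) → (U c → ℝ) → (U c → ℝ) → U c → U c → ℝ)
    (μ : (c : C) → S c → U c → ℝ) (c : C) (s : S c) (u : U c) : ℝ :=
  (∑ u', μ c s u' * ρ c (F c μ) (fun v => ∑ s', μ c s' v) u' u)
    - μ c s u * ∑ u', ρ c (F c μ) (fun v => ∑ s', μ c s' v) u u'

/-- Imitative revision protocol. -/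
def IsImitative {V : Type*} [Fintype V] (mc : ℝ)
    (ρ : (V → ℝ) → (V → ℝ) → V → V → ℝ) : Prop :=
  ∃ r : (V → ℝ) → (V → ℝ) → V → V → ℝ,
    (∃ K, LipschitzOnWith K (fun p : (V → ℝ) × (V → ℝ) => r p.1 p.2)
        (Set.univ ×ˢ simplexSet mc)) ∧
    (∀ F σ, σ ∈ simplexSet (V := V) mc → ∀ u v, 0 ≤ r F σ u v) ∧
    (∀ F σ, σ ∈ simplexSet (V := V) mc → ∀ u v k : V,
        (F u ≤ F v ↔ r F σ k u - r F σ u k ≤ r F σ k v - r F σ v k)) ∧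
    (∀ F σ, σ ∈ simplexSet (V := V) mc → ∀ u v, ρ F σ u v = r F σ u v * σ v / mc)

/-- Imitative-via-comparison revision protocol: imitative with sign-preserving
conditional imitation rates. -/
def IsImitativeViaComparison {V : Type*} [Fintype V] (mc : ℝ)
    (ρ : (V → ℝ) → (V → ℝ) → V → V → ℝ) : Prop :=
  ∃ r : (V → ℝ) → (V → ℝ) → V → V → ℝ,
    (∃ K, LipschitzOnWith K (fun p : (V → ℝ) × (V → ℝ) => r p.1 p.2)
        (Set.univ ×ˢ simplexSet mc)) ∧
    (∀ F σ, σ ∈ simplexSet (V := V) mc → ∀ u v, 0 ≤ r F σ u v) ∧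
    (∀ F σ, σ ∈ simplexSet (V := V) mc → ∀ u v k : V,
        (F u ≤ F v ↔ r F σ k u - r F σ u k ≤ r F σ k v - r F σ v k)) ∧
    (∀ F σ, σ ∈ simplexSet (V := V) mc → ∀ u v,
        Real.sign (r F σ u v) = Real.sign (max 0 (F v - F u))) ∧
    (∀ F σ, σ ∈ simplexSet (V := V) mc → ∀ u v, ρ F σ u v = r F σ u v * σ v / mc)

/-- Excess payoff revision protocol. -/
def IsExcessPayoff {V : Type*} [Fintype V] (mc : ℝ)
    (ρ : (V → ℝ) → (V → ℝ) → V → V → ℝ) : Prop :=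
  ∃ τ : (V → ℝ) → V → ℝ,
    (∃ K, LipschitzWith K τ) ∧
    (∀ F v, 0 ≤ τ F v) ∧
    (∀ Fhat : V → ℝ, (∃ v, 0 < Fhat v) → 0 < ∑ v, τ Fhat v * Fhat v) ∧
    (∀ F σ, σ ∈ simplexSet (V := V) mc → ∀ u v,
        ρ F σ u v = τ (fun w => F w - (∑ w', F w' * σ w') / mc) v)

/-- Pairwise comparison revision protocol. -/
def IsPairwiseComparison {V : Type*} [Fintype V] (mc : ℝ)
    (ρ : (V → ℝ) → (V → ℝ) → V → V → ℝ) : Prop :=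
  ∃ τ : (V → ℝ) → V → V → ℝ,
    (∃ K, LipschitzWith K τ) ∧
    (∀ F u v, 0 ≤ τ F u v) ∧
    (∀ F (u v : V), Real.sign (τ F u v) = Real.sign (max 0 (F v - F u))) ∧
    (∀ F σ, σ ∈ simplexSet (V := V) mc → ∀ u v, ρ F σ u v = τ F u v)

/-- If every class uses an imitative revision protocol and `μ` is a MSNE at
which, for every class, exactly one policy attains the maximal payoff, then `μ` is a rest
point of the mean dynamic. -/
theorem stmt17 [Fintype C] [Nonempty C]
    [∀ c, Fintype (S c)] [∀ c, Nonempty (S c)]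
    [∀ c, Fintype (U c)] [∀ c, Nonempty (U c)]
    (m lam : C → ℝ) (hm : ∀ c, 0 < m c) (hlam : ∀ c, 0 < lam c)
    (φ : (c : C) → U c → Matrix (S c) (S c) ℝ)
    (hφ0 : ∀ c (u : U c) s s', 0 ≤ φ c u s s')
    (hφ1 : ∀ c (u : U c) s', ∑ s, φ c u s s' = 1)
    (η : (c : C) → U c → S c → ℝ)
    (hη0 : ∀ c (u : U c) s, 0 ≤ η c u s)
    (hη1 : ∀ c (u : U c), ∑ s, η c u s = 1)
    (hηst : ∀ c (u : U c) s, ∑ s', φ c u s s' * η c u s' = η c u s)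
    (F : (c : C) → ((c' : C) → S c' → U c' → ℝ) → U c → ℝ)
    (ρ : (c : C) → (U c → ℝ) → (U c → ℝ) → U c → U c → ℝ)
    (hρ0 : ∀ c F' σ, σ ∈ simplexSet (m c) → ∀ u v, 0 ≤ ρ c F' σ u v)
    (hρ : ∀ c, IsImitative (m c) (ρ c))
    (μ : (c : C) → S c → U c → ℝ) (hμX : MemX m μ) (hMSNE : IsMSNE F η μ)
    (huniqmax : ∀ c, ∃! u : U c, ∀ v, F c μ v ≤ F c μ u) :
    ∀ c (s : S c) (u : U c), fdFlow lam φ μ c s u + frFlow F ρ μ c s u = 0 := by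
  intro c s u
  obtain ⟨hμ0, hμsum⟩ := hμX c
  have hσ0 : ∀ v, 0 ≤ ∑ s', μ c s' v := fun v => Finset.sum_nonneg fun s' _ => hμ0 s' v
  have hσsum : ∑ v, ∑ s', μ c s' v = m c := by rw [← hμsum]; exact Finset.sum_comm
  have hσmem : (fun v => ∑ s', μ c s' v) ∈ simplexSet (m c) := ⟨hσ0, hσsum⟩
  obtain ⟨ustar, hustar, huniq⟩ := huniqmax c
  have hzero : ∀ v, v ≠ ustar → (∑ s', μ c s' v) = 0 := by
    intro v hv
    by_contra h
    have hpos : 0 < ∑ s', μ c s' v := lt_of_le_of_ne (hσ0 v) (Ne.symm h)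
    exact hv (huniq v ((hMSNE c v).1 hpos))
  have hμzero : ∀ s' (v : U c), v ≠ ustar → μ c s' v = 0 := by
    intro s' v hv
    have h2 := (Finset.sum_eq_zero_iff_of_nonneg (fun s _ => hμ0 s v)).mp (hzero v hv)
    exact h2 s' (Finset.mem_univ s')
  -- dynamic flow is zero
  have hd : fdFlow lam φ μ c s u = 0 := by
    have heq : ∀ s', μ c s' u = η c u s' * ∑ s'', μ c s'' u := fun s' => (hMSNE c u).2 s'
    unfold fdFlow
    have hkey : ∑ s', φ c u s s' * μ c s' u = μ c s u := by
      calc ∑ s', φ c u s s' * μ c s' u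
          = (∑ s', φ c u s s' * η c u s') * ∑ s'', μ c s'' u := by
            rw [Finset.sum_mul]
            exact Finset.sum_congr rfl fun s' _ => by rw [heq s', mul_assoc]
        _ = η c u s * ∑ s'', μ c s'' u := by rw [hηst]
        _ = μ c s u := (heq s).symm
    rw [hkey]; ring
  -- revision flow is zero
  obtain ⟨r, -, hr0, -, hρeq⟩ := hρ c
  have hρzero : ∀ (w v : U c), v ≠ ustar →
      ρ c (F c μ) (fun v => ∑ s', μ c s' v) w v = 0 := by
    intro w v hv
    rw [hρeq _ _ hσmem, hzero v hv, mul_zero, zero_div]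
  have hfr : frFlow F ρ μ c s u = 0 := by
    unfold frFlow
    have h1 : (∑ u', μ c s u' * ρ c (F c μ) (fun v => ∑ s', μ c s' v) u' u)
        = μ c s ustar * ρ c (F c μ) (fun v => ∑ s', μ c s' v) ustar u := by
      apply Finset.sum_eq_single
      · intro u' _ hu'
        rw [hμzero s u' hu', zero_mul]
      · intro h; exact absurd (Finset.mem_univ ustar) h
    have h2 : (∑ u', ρ c (F c μ) (fun v => ∑ s', μ c s' v) u u')
        = ρ c (F c μ) (fun v => ∑ s', μ c s' v) u ustar := by
      apply Finset.sum_eq_single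
      · intro u' _ hu'
        exact hρzero u u' hu'
      · intro h; exact absurd (Finset.mem_univ ustar) h
    rw [h1, h2]
    by_cases hu : u = ustar
    · subst hu; ring
    · rw [hμzero s u hu, zero_mul, hρzero ustar u hu, mul_zero, sub_zero]
  rw [hd, hfr, add_zero]
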